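/- Let H be a real Hilbert space, L : H → ℝ continuously differentiable with gradient ∇L, and ℓ : [a,b] → H continuously differentiable with ℓ'(t) = -∇L(ℓ(t)) and ∇L(ℓ(t)) ≠ 0 for all t ∈ [a,b]. Suppose 𝒯 : ℝ → (0,∞) is continuous and satisfies ‖∇L(ℓ(t))‖ ≥ 𝒯(L(ℓ(t))) for all t ∈ [a,b]. Then the length of ℓ satisfies ∫_a^b ‖ℓ'(t)‖ dt ≤ ∫_{L(ℓ(b))}^{L(ℓ(a))} (1/𝒯(w)) dw. -/

import Mathlib

open MeasureTheory

/-- Abbondandolo–Majer length estimate: the length of a negative gradient flow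
line is bounded by the integral of `1/𝒯` over the traversed energy interval. -/
theorem stmt_9 {H : Type*} [NormedAddCommGroup H] [InnerProductSpace ℝ H]
    [CompleteSpace H]
    (L : H → ℝ) (hL : ContDiff ℝ 1 L) (gradL : H → H)
    (hgrad : ∀ x v, fderiv ℝ L x v = (inner ℝ (gradL x) v : ℝ))
    (a b : ℝ) (hab : a ≤ b)
    (ℓ : ℝ → H) (hℓ : ContDiff ℝ 1 ℓ)
    (hflow : ∀ t ∈ Set.Icc a b, deriv ℓ t = -gradL (ℓ t))
    (hne : ∀ t ∈ Set.Icc a b, gradL (ℓ t) ≠ 0)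
    (𝒯 : ℝ → ℝ) (h𝒯cont : Continuous 𝒯) (h𝒯pos : ∀ w, 0 < 𝒯 w)
    (h𝒯 : ∀ t ∈ Set.Icc a b, 𝒯 (L (ℓ t)) ≤ ‖gradL (ℓ t)‖) :
    ∫ t in a..b, ‖deriv ℓ t‖ ≤ ∫ w in (L (ℓ b))..(L (ℓ a)), 1 / 𝒯 w := by
  set g : ℝ → ℝ := fun t => L (ℓ t) with hg
  set φ : ℝ → ℝ := fun t => fderiv ℝ L (ℓ t) (deriv ℓ t) with hφ
  have hℓd : Continuous (deriv ℓ) := hℓ.continuous_deriv le_rfl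
  have hderiv : ∀ t, HasDerivAt g (φ t) t := by
    intro t
    exact ((hL.differentiable one_ne_zero (ℓ t)).hasFDerivAt).comp_hasDerivAt t
      ((hℓ.differentiable one_ne_zero t).hasDerivAt)
  have hφcont : Continuous φ :=
    (((hL.continuous_fderiv one_ne_zero).comp hℓ.continuous).clm_apply hℓd)
  have hTinv : Continuous fun w => 1 / 𝒯 w :=
    continuous_const.div h𝒯cont (fun w => (h𝒯pos w).ne')
  have hgc : Continuous g := hL.continuous.comp hℓ.continuous
  have hcov : ∫ t in a..b, φ t • (1 / 𝒯 (g t)) = ∫ w in g a..g b, 1 / 𝒯 w :=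
    intervalIntegral.integral_comp_smul_deriv (fun t _ => hderiv t)
      hφcont.continuousOn hTinv
  have hEq : ∫ w in g b..g a, 1 / 𝒯 w = ∫ t in a..b, (-φ t) / 𝒯 (g t) := by
    rw [intervalIntegral.integral_symm, ← hcov, ← intervalIntegral.integral_neg]
    congr 1
    funext t
    simp [smul_eq_mul, div_eq_mul_inv, mul_comm]
  rw [show (L (ℓ b)) = g b from rfl, show (L (ℓ a)) = g a from rfl, hEq]
  apply intervalIntegral.integral_mono_on hab
  · exact (hℓd.norm.intervalIntegrable a b)
  · exact ((hφcont.neg.div (h𝒯cont.comp hgc)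
      (fun t => (h𝒯pos (g t)).ne')).intervalIntegrable a b)
  · intro t ht
    have hfl := hflow t ht
    have hT := h𝒯 t ht
    have hTp := h𝒯pos (g t)
    have hφt : φ t = -(‖gradL (ℓ t)‖ ^ 2) := by
      rw [hφ]
      simp only [hgrad, hfl, inner_neg_right, real_inner_self_eq_norm_sq]
    rw [hfl, norm_neg, hφt, neg_neg]
    rw [le_div_iff₀ hTp, sq]
    exact mul_le_mul_of_nonneg_left hT (norm_nonneg _)
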